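/- Let Q : {(s,t) : 0 ≤ s < t ≤ 1} → (0,1] be a function that is jointly continuous, satisfies Q(r,t) = Q(r,s)·Q(s,t) whenever 0 ≤ r < s < t ≤ 1, and satisfies Q(s,t) → 1 as t − s → 0. Then there exists a finite nonatomic Borel measure ν on [0,1] such that Q(s,t) = exp(−ν((s,t))) for all 0 ≤ s < t ≤ 1. -/

import Mathlib

open Set MeasureTheory Filter Function

/-- A continuous multiplicative functional `Q(s,t)` on intervals, tending to 1 as the
interval shrinks, is of the form `exp(-ν((s,t)))` for a finite nonatomic Borel measure ν
on `[0,1]`. -/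
theorem multiplicative_functional_exponential (Q : ℝ → ℝ → ℝ)
    (hrange : ∀ s t : ℝ, 0 ≤ s → s < t → t ≤ 1 → 0 < Q s t ∧ Q s t ≤ 1)
    (hmul : ∀ r s t : ℝ, 0 ≤ r → r < s → s < t → t ≤ 1 → Q r t = Q r s * Q s t)
    (hcont : ContinuousOn (fun p : ℝ × ℝ => Q p.1 p.2)
      {p : ℝ × ℝ | 0 ≤ p.1 ∧ p.1 < p.2 ∧ p.2 ≤ 1})
    (hlim : ∀ ε > (0:ℝ), ∃ δ > (0:ℝ), ∀ s t : ℝ, 0 ≤ s → s < t → t ≤ 1 →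
      t - s < δ → |Q s t - 1| < ε) :
    ∃ ν : Measure ℝ, IsFiniteMeasure ν ∧ (∀ x : ℝ, ν {x} = 0) ∧
      ν ((Icc (0:ℝ) 1)ᶜ) = 0 ∧
      ∀ s t : ℝ, 0 ≤ s → s < t → t ≤ 1 →
        Q s t = Real.exp (-(ν (Ioo s t)).toReal) := by
  classical
  -- the cumulative function
  set f : ℝ → ℝ := fun t => if t ≤ 0 then 0 else -Real.log (Q 0 (min t 1)) with hf_def
  have hQ0pos : ∀ t : ℝ, 0 < t → t ≤ 1 → 0 < Q 0 t := fun t ht ht1 =>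
    (hrange 0 t le_rfl ht ht1).1
  have hQ0le : ∀ t : ℝ, 0 < t → t ≤ 1 → Q 0 t ≤ 1 := fun t ht ht1 =>
    (hrange 0 t le_rfl ht ht1).2
  -- f is nonnegative
  have hf_nonneg : ∀ t, 0 ≤ f t := by
    intro t
    simp only [hf_def]
    split_ifs with h
    · exact le_rfl
    · push_neg at h
      have h1 : 0 < min t 1 := lt_min h one_pos
      have h2 : min t 1 ≤ 1 := min_le_right _ _
      have := Real.log_nonpos (le_of_lt (hQ0pos _ h1 h2)) (hQ0le _ h1 h2)
      linarith
  -- monotonicity on (0,1]: Q 0 · is antitone in log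
  have key_anti : ∀ s t : ℝ, 0 < s → s < t → t ≤ 1 → Q 0 t ≤ Q 0 s := by
    intro s t hs hst ht1
    have h := hmul 0 s t le_rfl hs hst ht1
    have h1 := hrange s t (le_of_lt hs) hst ht1
    have h2 := hQ0pos s hs (le_of_lt (lt_of_lt_of_le hst ht1))
    nlinarith [h1.1, h1.2]
  have hf_mono : Monotone f := by
    intro s t hst
    rcases le_or_gt t 0 with ht | ht
    · simp only [hf_def, if_pos (hst.trans ht), if_pos ht]
      exact le_rfl
    rcases le_or_gt s 0 with hs | hs
    · simp only [hf_def, if_pos hs, if_neg (not_le.2 ht)]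
      exact hf_nonneg t |>.trans_eq (by simp [hf_def, not_le.2 ht])
    · simp only [hf_def, if_neg (not_le.2 hs), if_neg (not_le.2 ht)]
      have hs' : 0 < min s 1 := lt_min hs one_pos
      have ht' : 0 < min t 1 := lt_min ht one_pos
      have hmm : min s 1 ≤ min t 1 := min_le_min hst le_rfl
      rcases eq_or_lt_of_le hmm with he | hlt
      · rw [he]
      · have hQle : Q 0 (min t 1) ≤ Q 0 (min s 1) :=
          key_anti _ _ hs' hlt (min_le_right _ _)
        have := Real.log_le_log (hQ0pos _ ht' (min_le_right _ _)) hQle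
        linarith
  -- continuity of Q 0 · on (0,1]
  have hQcont : ContinuousOn (fun t => Q 0 t) (Ioc (0:ℝ) 1) := by
    have hmap : MapsTo (fun t : ℝ => ((0:ℝ), t)) (Ioc (0:ℝ) 1)
        {p : ℝ × ℝ | 0 ≤ p.1 ∧ p.1 < p.2 ∧ p.2 ≤ 1} := by
      intro t ht
      exact ⟨le_rfl, ht.1, ht.2⟩
    exact hcont.comp ((continuous_const.prodMk continuous_id).continuousOn) hmap
  -- continuity of f away from 0
  have hf_cont_pos : ∀ t : ℝ, 0 < t → ContinuousAt f t := by
    intro t ht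
    have h1 : ContinuousOn (fun u : ℝ => -Real.log (Q 0 (min u 1))) (Ioi (0:ℝ)) := by
      have hmin : ContinuousOn (fun u : ℝ => min u 1) (Ioi (0:ℝ)) :=
        (continuous_id.min continuous_const).continuousOn
      have hmap : MapsTo (fun u : ℝ => min u 1) (Ioi (0:ℝ)) (Ioc (0:ℝ) 1) := by
        intro u hu; exact ⟨lt_min hu one_pos, min_le_right _ _⟩
      have : ContinuousOn (fun u : ℝ => Real.log (Q 0 (min u 1))) (Ioi (0:ℝ)) :=
        ContinuousOn.log (hQcont.comp hmin hmap)
          (fun u hu => ne_of_gt (hQ0pos _ (lt_min hu one_pos) (min_le_right _ _)))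
      exact this.neg
    have h2 : ContinuousOn f (Ioi (0:ℝ)) := by
      refine h1.congr ?_
      intro u hu
      simp [hf_def, not_le.2 (mem_Ioi.mp hu)]
    exact h2.continuousAt (Ioi_mem_nhds ht)
  have hf_cont_neg : ∀ t : ℝ, t < 0 → ContinuousAt f t := by
    intro t ht
    have : f =ᶠ[nhds t] fun _ => 0 := by
      filter_upwards [Iio_mem_nhds ht] with u hu
      simp [hf_def, le_of_lt (mem_Iio.mp hu)]
    exact ContinuousAt.congr (continuousAt_const) this.symm
  have hf_zero : f 0 = 0 := by simp [hf_def]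
  have hf_cont_zero : ContinuousAt f 0 := by
    rw [Metric.continuousAt_iff]
    intro ε hε
    obtain ⟨δ, hδ, hδ'⟩ := hlim (1 - Real.exp (-ε)) (by
      have := Real.exp_lt_one_iff.2 (neg_neg_iff_pos.2 hε)
      linarith)
    refine ⟨min δ 1, lt_min hδ one_pos, fun t hdist => ?_⟩
    rw [Real.dist_eq, sub_zero] at hdist
    rw [Real.dist_eq, hf_zero, sub_zero]
    rcases le_or_gt t 0 with h | h
    · simp [hf_def, h, hε]
    · have ht1 : t < 1 := lt_of_le_of_lt (le_abs_self t) (lt_of_lt_of_le hdist (min_le_right _ _))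
      have htδ : t < δ := lt_of_le_of_lt (le_abs_self t) (lt_of_lt_of_le hdist (min_le_left _ _))
      have hm : min t 1 = t := min_eq_left (le_of_lt ht1)
      have hQ := hδ' 0 t le_rfl h (le_of_lt ht1) (by linarith)
      have hQlow : Real.exp (-ε) < Q 0 t := by
        cases abs_lt.mp hQ with | intro h1 h2 => linarith
      have hQhi : Q 0 t ≤ 1 := hQ0le t h (le_of_lt ht1)
      have hQpos : 0 < Q 0 t := hQ0pos t h (le_of_lt ht1)
      have hlog1 : -ε < Real.log (Q 0 t) := by
        have := Real.log_lt_log (Real.exp_pos _) hQlow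
        rwa [Real.log_exp] at this
      have hlog2 : Real.log (Q 0 t) ≤ 0 := Real.log_nonpos (le_of_lt hQpos) hQhi
      have hval : f t = -Real.log (Q 0 t) := by simp [hf_def, not_le.2 h, hm]
      rw [hval, abs_of_nonneg (by linarith)]
      linarith
  have hf_cont : Continuous f := by
    rw [continuous_iff_continuousAt]
    intro t
    rcases lt_trichotomy t 0 with h | h | h
    · exact hf_cont_neg t h
    · rw [h]; exact hf_cont_zero
    · exact hf_cont_pos t h
  -- Stieltjes function
  set F : StieltjesFunction ℝ :=
    { toFun := f
      mono' := hf_mono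
      right_continuous' := fun x => hf_cont.continuousAt.continuousWithinAt } with hF_def
  have hleftLim : ∀ x : ℝ, leftLim f x = f x := by
    intro x
    refine leftLim_eq_of_tendsto ?_
    exact (hf_cont.continuousAt.tendsto).mono_left nhdsWithin_le_nhds
  -- limits at infinity
  have h_bot : Tendsto f atBot (nhds 0) := by
    have : f =ᶠ[atBot] fun _ => 0 := by
      filter_upwards [Iic_mem_atBot 0] with u hu
      simp only [hf_def, if_pos (mem_Iic.mp hu)]
    exact Tendsto.congr' this.symm tendsto_const_nhds
  have h_top : Tendsto f atTop (nhds (f 1)) := by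
    have : f =ᶠ[atTop] fun _ => f 1 := by
      filter_upwards [Ici_mem_atTop 1] with u hu
      have hu' : (1:ℝ) ≤ u := mem_Ici.mp hu
      simp only [hf_def]
      rw [if_neg (by norm_num : ¬ (1:ℝ) ≤ 0), if_neg (by linarith : ¬ u ≤ 0),
        min_eq_right hu', min_eq_left le_rfl]
    exact Tendsto.congr' this.symm tendsto_const_nhds
  refine ⟨F.measure, F.isFiniteMeasure h_bot h_top, ?_, ?_, ?_⟩
  · intro x
    rw [F.measure_singleton]
    show ENNReal.ofReal (f x - leftLim f x) = 0
    rw [hleftLim x, sub_self, ENNReal.ofReal_zero]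
  · have h1 : F.measure (Iic 0) = 0 := by
      rw [F.measure_Iic h_bot]
      show ENNReal.ofReal (f 0 - 0) = 0
      rw [hf_zero, sub_zero, ENNReal.ofReal_zero]
    have h2 : F.measure (Ici 1) = 0 := by
      rw [F.measure_Ici h_top]
      show ENNReal.ofReal (f 1 - leftLim f 1) = 0
      rw [hleftLim 1, sub_self, ENNReal.ofReal_zero]
    have hsub : (Icc (0:ℝ) 1)ᶜ ⊆ Iic 0 ∪ Ici 1 := by
      intro x hx
      simp only [mem_compl_iff, mem_Icc, not_and_or, not_le] at hx
      rcases hx with h | h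
      · exact Or.inl (le_of_lt h)
      · exact Or.inr (le_of_lt h)
    refine le_antisymm ?_ zero_le
    calc F.measure ((Icc (0:ℝ) 1)ᶜ) ≤ F.measure (Iic 0 ∪ Ici 1) := measure_mono hsub
      _ ≤ F.measure (Iic 0) + F.measure (Ici 1) := measure_union_le _ _
      _ = 0 := by rw [h1, h2, add_zero]
  · intro s t hs hst ht1
    have hQpos : 0 < Q s t := (hrange s t hs hst ht1).1
    have hmeas : F.measure (Ioo s t) = ENNReal.ofReal (f t - f s) := by
      rw [F.measure_Ioo]
      show ENNReal.ofReal (leftLim f t - f s) = _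
      rw [hleftLim t]
    have hftval : f t = -Real.log (Q 0 t) := by
      simp [hf_def, not_le.2 (lt_of_le_of_lt hs hst), min_eq_left ht1]
    have hkey : f t - f s = -Real.log (Q s t) := by
      rcases eq_or_lt_of_le hs with he | hspos
      · rw [← he] at *
        rw [hftval, hf_zero]
        ring
      · have hs1 : s ≤ 1 := le_of_lt (lt_of_lt_of_le hst ht1)
        have hfsval : f s = -Real.log (Q 0 s) := by
          simp [hf_def, not_le.2 hspos, min_eq_left hs1]
        have hm := hmul 0 s t le_rfl hspos hst ht1
        have hlog : Real.log (Q 0 t) = Real.log (Q 0 s) + Real.log (Q s t) := by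
          rw [hm]
          exact Real.log_mul (ne_of_gt (hQ0pos s hspos hs1)) (ne_of_gt hQpos)
        rw [hftval, hfsval, hlog]
        ring
    have hnn : 0 ≤ f t - f s := sub_nonneg.2 (hf_mono (le_of_lt hst))
    rw [hmeas, ENNReal.toReal_ofReal hnn, hkey, neg_neg, Real.exp_log hQpos]
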